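/- Let G be a countable group with a subadditive length function |·| (|gh| ≤ |g|+|h|, |e|=0) such that the growth rate v = limsup_{t→∞} (1/t) log card{g : |g| ≤ t} is finite. Then there is a constant C such that for every probability measure θ on G with finite first moment |θ| = ∑ θ(g)|g|, the entropy satisfies H(θ) ≤ C(|θ| + 1). -/
import Mathlib


open scoped ENNReal
open Filter Topology MeasureTheory

/-- Convolution of probability measures on a group. -/
noncomputable def pmfConv {G : Type*} [Group G] (μ ν : PMF G) : PMF G :=
  μ.bind fun h => ν.map fun k => h * k

/-- Shannon entropy, valued in `[0,∞]`. -/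
noncomputable def pmfEntropy {G : Type*} (θ : PMF G) : ℝ≥0∞ :=
  ∑' g, ENNReal.ofReal (Real.negMulLog (θ g).toReal)

/-- `convPrefix μ n = μ 0 * μ 1 * ⋯ * μ (n-1)` (n factors). -/
noncomputable def convPrefix {G : Type*} [Group G] (μ : ℕ → PMF G) : ℕ → PMF G
  | 0 => PMF.pure 1
  | n + 1 => pmfConv (convPrefix μ n) (μ n)

/-- First moment `|θ| = ∑_g θ(g) ℓ(g)` of a measure with respect to a length
function `ℓ`, valued in `[0,∞]`. -/
noncomputable def pmfMoment {G : Type*} (ℓ : G → ℝ) (θ : PMF G) : ℝ≥0∞ :=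
  ∑' g, θ g * ENNReal.ofReal (ℓ g)


/-- Pointwise Gibbs-type inequality: `-x log x ≤ w + x·(-log w)` for `x ≥ 0`, `w > 0`. -/
lemma negMulLog_le_aux {x w : ℝ} (hx : 0 ≤ x) (hw : 0 < w) :
    Real.negMulLog x ≤ w + x * (-Real.log w) := by
  rcases eq_or_lt_of_le hx with h | h
  · simp [← h, Real.negMulLog, hw.le]
  · have hlog := Real.log_le_sub_one_of_pos (div_pos hw h)
    rw [Real.log_div hw.ne' h.ne'] at hlog
    have h2 : x * (Real.log w - Real.log x) ≤ x * (w / x - 1) :=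
      mul_le_mul_of_nonneg_left hlog hx
    have h3 : x * (w / x - 1) = w - x := by field_simp
    rw [h3] at h2
    simp only [Real.negMulLog]
    nlinarith

/-- Derriennic's lemma: if a subadditive length function on `G` has
finite exponential growth rate, then there is `C` with `H(θ) ≤ C(|θ| + 1)` for every
probability measure `θ` with finite first moment. -/
theorem entropy_le_moment_bound {G : Type*} [Group G] [Countable G]
    (ℓ : G → ℝ) (hnn : ∀ g, 0 ≤ ℓ g) (hone : ℓ 1 = 0)
    (hsub : ∀ g h : G, ℓ (g * h) ≤ ℓ g + ℓ h)
    (hfin : ∀ t : ℝ, {g : G | ℓ g ≤ t}.Finite)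
    (hgrowth : ∃ v : ℝ, ∀ᶠ t : ℝ in atTop,
      Real.log (Nat.card {g : G | ℓ g ≤ t}) ≤ v * t) :
    ∃ C : ℝ, 0 < C ∧ ∀ θ : PMF G, pmfMoment ℓ θ ≠ ⊤ →
      pmfEntropy θ ≤ ENNReal.ofReal (C * ((pmfMoment ℓ θ).toReal + 1)) := by
  classical
  obtain ⟨v, hv⟩ := hgrowth
  obtain ⟨T, hT⟩ := eventually_atTop.1 hv
  set a : ℝ := max v 0 + 1 with ha_def
  have ha : 0 < a := by positivity
  have hav : v + 1 ≤ a := by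
    have := le_max_left v 0; linarith [le_max_left v (0:ℝ)]
  set S : ℝ≥0∞ := ∑' g : G, ENNReal.ofReal (Real.exp (-(a * ℓ g))) with hS_def
  set c : ℕ → ℝ := fun n => (Nat.card {g : G | ℓ g ≤ (n : ℝ)}) *
      (Real.exp a * Real.exp (-(a * n))) with hc_def
  have hc_nn : ∀ n, 0 ≤ c n := by
    intro n; apply mul_nonneg (Nat.cast_nonneg _); positivity
  have hc_sum : Summable c := by
    set N : ℕ := ⌈T⌉₊ with hN_def
    rw [← summable_nat_add_iff N]
    have hgeo : Summable (fun n : ℕ => Real.exp a * Real.exp (-1) ^ n) :=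
      (summable_geometric_of_lt_one (Real.exp_pos _).le
        (Real.exp_lt_one_iff.2 (by norm_num))).mul_left _
    refine Summable.of_nonneg_of_le (fun n => hc_nn _) (fun n => ?_) hgeo
    have hTn : T ≤ ((n + N : ℕ) : ℝ) := by
      calc T ≤ (N : ℝ) := Nat.le_ceil T
      _ ≤ ((n + N : ℕ) : ℝ) := by exact_mod_cast Nat.le_add_left N n
    have hcard1 : 1 ≤ Nat.card {g : G | ℓ g ≤ ((n + N : ℕ) : ℝ)} := by
      have hfin' : Finite {g : G | ℓ g ≤ ((n + N : ℕ) : ℝ)} := (hfin _).to_subtype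
      have hne : (1 : G) ∈ {g : G | ℓ g ≤ ((n + N : ℕ) : ℝ)} := by
        simp only [Set.mem_setOf_eq, hone]; positivity
      have : Nonempty {g : G | ℓ g ≤ ((n + N : ℕ) : ℝ)} := ⟨⟨1, hne⟩⟩
      exact Nat.card_pos
    have hcard : ((Nat.card {g : G | ℓ g ≤ ((n + N : ℕ) : ℝ)}) : ℝ) ≤
        Real.exp (v * ((n + N : ℕ) : ℝ)) := by
      have hpos : (0 : ℝ) < Nat.card {g : G | ℓ g ≤ ((n + N : ℕ) : ℝ)} := by
        exact_mod_cast hcard1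
      calc ((Nat.card {g : G | ℓ g ≤ ((n + N : ℕ) : ℝ)}) : ℝ)
          = Real.exp (Real.log _) := (Real.exp_log hpos).symm
        _ ≤ Real.exp (v * ((n + N : ℕ) : ℝ)) := Real.exp_le_exp.2 (hT _ hTn)
    have hm0 : (0 : ℝ) ≤ ((n + N : ℕ) : ℝ) := Nat.cast_nonneg _
    have hmn : (n : ℝ) ≤ ((n + N : ℕ) : ℝ) := by exact_mod_cast Nat.le_add_right n N
    calc c (n + N) ≤ Real.exp (v * ((n + N : ℕ) : ℝ)) *
          (Real.exp a * Real.exp (-(a * ((n + N : ℕ) : ℝ)))) :=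
        mul_le_mul_of_nonneg_right hcard (by positivity)
      _ = Real.exp a * Real.exp ((v - a) * ((n + N : ℕ) : ℝ)) := by
          rw [← Real.exp_add, ← Real.exp_add, ← Real.exp_add]; ring_nf
      _ ≤ Real.exp a * Real.exp (-1) ^ n := by
          rw [← Real.exp_nat_mul]
          refine mul_le_mul_of_nonneg_left (Real.exp_le_exp.2 ?_) (Real.exp_pos _).le
          nlinarith
  have hS : S ≠ ⊤ := by
    have key : ∀ g : G, ENNReal.ofReal (Real.exp (-(a * ℓ g))) ≤
        ∑' n : ℕ, Set.indicator {g' : G | ℓ g' ≤ (n : ℝ)}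
          (fun _ => ENNReal.ofReal (Real.exp a * Real.exp (-(a * n)))) g := by
      intro g
      have h1 : g ∈ {g' : G | ℓ g' ≤ ((⌈ℓ g⌉₊ : ℕ) : ℝ)} := by
        simp only [Set.mem_setOf_eq]; exact Nat.le_ceil _
      have h2 : ((⌈ℓ g⌉₊ : ℕ) : ℝ) ≤ ℓ g + 1 := (Nat.ceil_lt_add_one (hnn g)).le
      refine le_trans ?_ (ENNReal.le_tsum ⌈ℓ g⌉₊)
      rw [Set.indicator_of_mem h1]
      apply ENNReal.ofReal_le_ofReal
      rw [← Real.exp_add]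
      refine Real.exp_le_exp.2 ?_
      nlinarith
    have hinner : ∀ n : ℕ, (∑' g : G, Set.indicator {g' : G | ℓ g' ≤ (n : ℝ)}
        (fun _ => ENNReal.ofReal (Real.exp a * Real.exp (-(a * n)))) g) =
        ENNReal.ofReal (c n) := by
      intro n
      rw [tsum_eq_sum (s := (hfin n).toFinset)
        (fun b hb => Set.indicator_of_notMem (by simpa using hb) _)]
      rw [Finset.sum_congr rfl (fun b hb => Set.indicator_of_mem (by simpa using hb) _)]
      rw [Finset.sum_const, nsmul_eq_mul]
      have hcard : ((hfin n).toFinset.card : ℕ) = Nat.card {g : G | ℓ g ≤ (n : ℝ)} := by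
        rw [Nat.card_coe_set_eq, Set.ncard_eq_toFinset_card _ (hfin n)]
      rw [hc_def]
      simp only
      rw [ENNReal.ofReal_mul (Nat.cast_nonneg _), ENNReal.ofReal_natCast, ← hcard]
    have hS_le : S ≤ ENNReal.ofReal (∑' n, c n) := by
      rw [ENNReal.ofReal_tsum_of_nonneg hc_nn hc_sum]
      calc S ≤ ∑' (g : G) (n : ℕ), Set.indicator {g' : G | ℓ g' ≤ (n : ℝ)}
            (fun _ => ENNReal.ofReal (Real.exp a * Real.exp (-(a * n)))) g :=
          ENNReal.tsum_le_tsum key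
        _ = ∑' (n : ℕ) (g : G), Set.indicator {g' : G | ℓ g' ≤ (n : ℝ)}
            (fun _ => ENNReal.ofReal (Real.exp a * Real.exp (-(a * n)))) g :=
          ENNReal.tsum_comm
        _ = ∑' n : ℕ, ENNReal.ofReal (c n) := tsum_congr hinner
    exact ne_top_of_le_ne_top ENNReal.ofReal_ne_top hS_le
  refine ⟨a + S.toReal, by positivity, fun θ hM => ?_⟩
  have hpt : ∀ g : G, ENNReal.ofReal (Real.negMulLog (θ g).toReal) ≤
      ENNReal.ofReal (Real.exp (-(a * ℓ g))) + θ g * ENNReal.ofReal (a * ℓ g) := by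
    intro g
    have h1 := negMulLog_le_aux (x := (θ g).toReal) (w := Real.exp (-(a * ℓ g)))
      ENNReal.toReal_nonneg (Real.exp_pos _)
    rw [Real.log_exp, neg_neg] at h1
    calc ENNReal.ofReal (Real.negMulLog (θ g).toReal)
        ≤ ENNReal.ofReal (Real.exp (-(a * ℓ g)) + (θ g).toReal * (a * ℓ g)) :=
        ENNReal.ofReal_le_ofReal h1
      _ = ENNReal.ofReal (Real.exp (-(a * ℓ g))) +
          ENNReal.ofReal ((θ g).toReal * (a * ℓ g)) :=
        ENNReal.ofReal_add (Real.exp_pos _).le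
          (mul_nonneg ENNReal.toReal_nonneg (mul_nonneg ha.le (hnn g)))
      _ = ENNReal.ofReal (Real.exp (-(a * ℓ g))) + θ g * ENNReal.ofReal (a * ℓ g) := by
        rw [ENNReal.ofReal_mul ENNReal.toReal_nonneg,
          ENNReal.ofReal_toReal (PMF.apply_ne_top θ g)]
  have hmom : (∑' g : G, θ g * ENNReal.ofReal (a * ℓ g)) =
      ENNReal.ofReal a * pmfMoment ℓ θ := by
    rw [pmfMoment, ← ENNReal.tsum_mul_left]
    refine tsum_congr fun g => ?_
    rw [ENNReal.ofReal_mul ha.le]; ring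
  have hchain : pmfEntropy θ ≤ S + ENNReal.ofReal a * pmfMoment ℓ θ := by
    calc pmfEntropy θ ≤ ∑' g : G, (ENNReal.ofReal (Real.exp (-(a * ℓ g))) +
          θ g * ENNReal.ofReal (a * ℓ g)) := ENNReal.tsum_le_tsum hpt
      _ = S + ∑' g : G, θ g * ENNReal.ofReal (a * ℓ g) := ENNReal.tsum_add
      _ = S + ENNReal.ofReal a * pmfMoment ℓ θ := by rw [hmom]
  refine hchain.trans ?_
  have heq : S + ENNReal.ofReal a * pmfMoment ℓ θ =
      ENNReal.ofReal (S.toReal + a * (pmfMoment ℓ θ).toReal) := by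
    rw [ENNReal.ofReal_add ENNReal.toReal_nonneg
        (mul_nonneg ha.le ENNReal.toReal_nonneg),
      ENNReal.ofReal_toReal hS, ENNReal.ofReal_mul ha.le, ENNReal.ofReal_toReal hM]
  rw [heq]
  apply ENNReal.ofReal_le_ofReal
  have h1 : (0:ℝ) ≤ S.toReal := ENNReal.toReal_nonneg
  have h2 : (0:ℝ) ≤ (pmfMoment ℓ θ).toReal := ENNReal.toReal_nonneg
  nlinarith
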